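/- The second derivative of f at the midpoint x* = (y1 + y2)/2 equals (−4/L²)·(σ0⁴/(σ0² + σ²))·exp(−(y2 − y1)²/(4L²))·(1 − (y2 − y1)²/(2L²)). Consequently, f''(x*) < 0 when (y2 − y1)² < 2L² and f''(x*) > 0 when (y2 − y1)² > 2L². -/

import Mathlib

private lemma key1 (L y : ℝ) (x : ℝ) :
    HasDerivAt (fun x => Real.exp (-(x - y) ^ 2 / L ^ 2))
      (Real.exp (-(x - y) ^ 2 / L ^ 2) * (-2 * (x - y) / L ^ 2)) x := by
  have h0 : HasDerivAt (fun x : ℝ => x - y) 1 x := (hasDerivAt_id x).sub_const y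
  have h1 : HasDerivAt (fun x : ℝ => -(x - y) ^ 2 / L ^ 2) (-2 * (x - y) / L ^ 2) x := by
    have := ((h0.pow 2).neg).div_const (L ^ 2)
    refine this.congr_deriv ?_
    ring
  exact h1.exp

private lemma key2 (L y : ℝ) (x : ℝ) :
    HasDerivAt (fun x => Real.exp (-(x - y) ^ 2 / L ^ 2) * (-2 * (x - y) / L ^ 2))
      (Real.exp (-(x - y) ^ 2 / L ^ 2) *
        ((-2 * (x - y) / L ^ 2) * (-2 * (x - y) / L ^ 2) + -2 / L ^ 2)) x := by
  have h0 : HasDerivAt (fun x : ℝ => -2 * (x - y) / L ^ 2) (-2 / L ^ 2) x := by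
    have := (((hasDerivAt_id x).sub_const y).const_mul (-2 : ℝ)).div_const (L ^ 2)
    refine this.congr_deriv ?_
    ring
  have := (key1 L y x).mul h0
  refine this.congr_deriv ?_
  ring

theorem second_deriv_at_midpoint
    (y1 y2 L σ0 σ : ℝ) (hy : y1 < y2) (hL : 0 < L) (hσ0 : 0 < σ0) (hσ : 0 < σ)
    (f : ℝ → ℝ)
    (hf : ∀ x, f x = (σ0 ^ 4 / (σ0 ^ 2 + σ ^ 2)) *
      (Real.exp (-(x - y1) ^ 2 / L ^ 2) + Real.exp (-(x - y2) ^ 2 / L ^ 2))) :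
    deriv (deriv f) ((y1 + y2) / 2) =
      (-4 / L ^ 2) * (σ0 ^ 4 / (σ0 ^ 2 + σ ^ 2)) *
        Real.exp (-(y2 - y1) ^ 2 / (4 * L ^ 2)) * (1 - (y2 - y1) ^ 2 / (2 * L ^ 2)) ∧
    ((y2 - y1) ^ 2 < 2 * L ^ 2 → deriv (deriv f) ((y1 + y2) / 2) < 0) ∧
    ((y2 - y1) ^ 2 > 2 * L ^ 2 → deriv (deriv f) ((y1 + y2) / 2) > 0) := by
  set c : ℝ := σ0 ^ 4 / (σ0 ^ 2 + σ ^ 2) with hc_def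
  have hc : 0 < c := by positivity
  have hL2 : (0:ℝ) < L ^ 2 := by positivity
  have hfeq : f = fun x => c * (Real.exp (-(x - y1) ^ 2 / L ^ 2) +
      Real.exp (-(x - y2) ^ 2 / L ^ 2)) := funext hf
  have hd1 : deriv f = fun x => c * (Real.exp (-(x - y1) ^ 2 / L ^ 2) * (-2 * (x - y1) / L ^ 2) +
      Real.exp (-(x - y2) ^ 2 / L ^ 2) * (-2 * (x - y2) / L ^ 2)) := by
    funext x
    rw [hfeq]
    exact (((key1 L y1 x).add (key1 L y2 x)).const_mul c).deriv
  set m : ℝ := (y1 + y2) / 2 with hm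
  have hd2 : deriv (deriv f) m = c *
      (Real.exp (-(m - y1) ^ 2 / L ^ 2) *
        ((-2 * (m - y1) / L ^ 2) * (-2 * (m - y1) / L ^ 2) + -2 / L ^ 2) +
       Real.exp (-(m - y2) ^ 2 / L ^ 2) *
        ((-2 * (m - y2) / L ^ 2) * (-2 * (m - y2) / L ^ 2) + -2 / L ^ 2)) := by
    rw [hd1]
    exact (((key2 L y1 m).add (key2 L y2 m)).const_mul c).deriv
  have hA : -(m - y1) ^ 2 / L ^ 2 = -(y2 - y1) ^ 2 / (4 * L ^ 2) := by
    rw [hm]; ring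
  have hB : -(m - y2) ^ 2 / L ^ 2 = -(y2 - y1) ^ 2 / (4 * L ^ 2) := by
    rw [hm]; ring
  set E : ℝ := Real.exp (-(y2 - y1) ^ 2 / (4 * L ^ 2)) with hE_def
  have hE : 0 < E := Real.exp_pos _
  have hmain : deriv (deriv f) m =
      (-4 / L ^ 2) * c * E * (1 - (y2 - y1) ^ 2 / (2 * L ^ 2)) := by
    rw [hd2, hA, hB, ← hE_def]
    have hm1 : m - y1 = (y2 - y1) / 2 := by rw [hm]; ring
    have hm2 : m - y2 = -((y2 - y1) / 2) := by rw [hm]; ring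
    rw [hm1, hm2]
    field_simp
    ring
  refine ⟨hmain, ?_, ?_⟩
  · intro h
    rw [hmain]
    have h1 : 0 < 1 - (y2 - y1) ^ 2 / (2 * L ^ 2) := by
      rw [sub_pos, div_lt_one (by positivity)]; linarith
    have h2 : (0:ℝ) < 4 / L ^ 2 * c * E := by positivity
    have heq : -4 / L ^ 2 * c * E * (1 - (y2 - y1) ^ 2 / (2 * L ^ 2)) =
        -(4 / L ^ 2 * c * E * (1 - (y2 - y1) ^ 2 / (2 * L ^ 2))) := by ring
    rw [heq]
    exact neg_lt_zero.mpr (mul_pos h2 h1)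
  · intro h
    rw [hmain]
    have h1 : 1 - (y2 - y1) ^ 2 / (2 * L ^ 2) < 0 := by
      rw [sub_neg, lt_div_iff₀ (by positivity)]; linarith
    have h2 : (0:ℝ) < 4 / L ^ 2 * c * E := by positivity
    have heq : -4 / L ^ 2 * c * E * (1 - (y2 - y1) ^ 2 / (2 * L ^ 2)) =
        4 / L ^ 2 * c * E * -(1 - (y2 - y1) ^ 2 / (2 * L ^ 2)) := by ring
    rw [heq]
    exact mul_pos h2 (neg_pos.mpr h1)
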